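/- arXiv:1303.4792 — 2 statements merged into one kernel-verified Lean document; each statement's English description precedes it below -/
import Mathlib

section
/- Let 1 ≤ p₁, p₂ < ∞, let 0 < r ≤ 1, and let σ : 𝕋ⁿ × ℤⁿ → ℂ be such that σ(·,k) ∈ L^{p₂}(μ) for every k ∈ ℤⁿ and ∑_{k∈ℤⁿ} ‖σ(·,k)‖_{L^{p₂}(μ)}^r < ∞. Then the operator A = Op(σ) with symbol σ is a well-defined bounded linear operator from L^{p₁}(μ) to L^{p₂}(μ) and is r-nuclear. -/
open MeasureTheory ENNReal NNReal Real

noncomputable section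

/-- For `0 < r ≤ 1`, a bounded linear operator `T : E → F` between complex Banach spaces is
`r`-nuclear if there are sequences `(x'_m)` of continuous functionals on `E` and `(y_m)` in `F`
with `T v = ∑ₘ x'_m(v) • y_m` for all `v` and `∑ₘ ‖x'_m‖^r ‖y_m‖^r < ∞`. -/
def IsRNuclear {E F : Type*} [NormedAddCommGroup E] [NormedSpace ℂ E]
    [NormedAddCommGroup F] [NormedSpace ℂ F] (r : ℝ) (T : E →L[ℂ] F) : Prop :=
  ∃ (x' : ℕ → (E →L[ℂ] ℂ)) (y : ℕ → F),
    (∀ v : E, HasSum (fun m => x' m v • y m) (T v)) ∧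
    Summable (fun m => ‖x' m‖ ^ r * ‖y m‖ ^ r)

/-- The `n`-torus `𝕋ⁿ = (ℝ/ℤ)ⁿ`; its `volume` measure is the product of the normalized
Haar measures of the circle factors, a probability measure. -/
abbrev Torus (n : ℕ) := Fin n → AddCircle (1 : ℝ)

/-- The character `e_k(x) = ∏ i, exp(2πi k_i x_i)` on the `n`-torus. -/
noncomputable def eK {n : ℕ} (k : Fin n → ℤ) (x : Torus n) : ℂ :=
  ∏ i, (fourier (k i) : C(AddCircle (1 : ℝ), ℂ)) (x i)

/-- The `k`-th Fourier coefficient `f̂(k) = ∫ f conj(e_k) dμ` of `f : 𝕋ⁿ → ℂ`. -/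
noncomputable def fourierCoeffT {n : ℕ} (f : Torus n → ℂ) (k : Fin n → ℤ) : ℂ :=
  ∫ x, f x * (starRingEnd ℂ) (eK k x)

/-- `A` is the operator `Op(σ)` with symbol `σ`: `A f = ∑_k f̂(k) • (σ(·,k) e_k)`,
the series converging in `L^{p₂}(μ)`. -/
def IsOp {n : ℕ} {p₁ p₂ : ℝ≥0∞} [Fact (1 ≤ p₁)] [Fact (1 ≤ p₂)]
    (σ : Torus n → (Fin n → ℤ) → ℂ)
    (A : Lp ℂ p₁ (volume : Measure (Torus n)) →L[ℂ] Lp ℂ p₂ (volume : Measure (Torus n))) :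
    Prop :=
  ∃ F : (Fin n → ℤ) → Lp ℂ p₂ (volume : Measure (Torus n)),
    (∀ k, ⇑(F k) =ᵐ[volume] fun x => σ x k * eK k x) ∧
    ∀ f : Lp ℂ p₁ (volume : Measure (Torus n)),
      HasSum (fun k => fourierCoeffT (⇑f) k • F k) (A f)

namespace OpAux

open Filter

instance instProbTorus (n : ℕ) : IsProbabilityMeasure (volume : Measure (Torus n)) := by
  haveI : IsProbabilityMeasure (volume : Measure (AddCircle (1 : ℝ))) :=
    ⟨by simp [AddCircle.measure_univ]⟩
  infer_instance

lemma continuous_eK {n : ℕ} (k : Fin n → ℤ) : Continuous (eK k) := by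
  unfold eK
  exact continuous_finset_prod _ fun i _ =>
    (fourier (k i)).continuous.comp (continuous_apply i)

lemma norm_eK {n : ℕ} (k : Fin n → ℤ) (x : Torus n) : ‖eK k x‖ = 1 := by
  simp [eK, fourier_apply, Circle.norm_coe]

lemma fourierCoeffT_congr {n : ℕ} {f g : Torus n → ℂ} (h : f =ᵐ[volume] g)
    (k : Fin n → ℤ) : fourierCoeffT f k = fourierCoeffT g k :=
  integral_congr_ae (h.mono fun x hx => by simp only [hx])

lemma integrable_mul_conj_eK {n : ℕ} {p₁ : ℝ≥0∞} [Fact (1 ≤ p₁)]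
    {f : Torus n → ℂ} (hf : MemLp f p₁ (volume : Measure (Torus n))) (k : Fin n → ℤ) :
    Integrable (fun x => f x * (starRingEnd ℂ) (eK k x)) (volume : Measure (Torus n)) := by
  have hint : Integrable f (volume : Measure (Torus n)) :=
    memLp_one_iff_integrable.mp (hf.mono_exponent Fact.out)
  have hc : Continuous fun x : Torus n => (starRingEnd ℂ) (eK k x) :=
    Complex.continuous_conj.comp (continuous_eK k)
  have h := hint.bdd_mul hc.aestronglyMeasurable
    (c := 1) (Eventually.of_forall fun x => by rw [RCLike.norm_conj, norm_eK])
  exact h.congr (Eventually.of_forall fun x => mul_comm _ _)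

lemma norm_fourierCoeffT_le {n : ℕ} {p₁ : ℝ≥0∞} [Fact (1 ≤ p₁)]
    {f : Torus n → ℂ} (hf : MemLp f p₁ (volume : Measure (Torus n))) (k : Fin n → ℤ) :
    ‖fourierCoeffT f k‖ ≤ (eLpNorm f p₁ (volume : Measure (Torus n))).toReal := by
  calc ‖fourierCoeffT f k‖
      ≤ ∫ x, ‖f x * (starRingEnd ℂ) (eK k x)‖ := norm_integral_le_integral_norm _
    _ = ∫ x, ‖f x‖ := by
        refine integral_congr_ae (Eventually.of_forall fun x => ?_)
        simp only [norm_mul, RCLike.norm_conj, norm_eK, mul_one]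
    _ = (eLpNorm f 1 (volume : Measure (Torus n))).toReal := by
        rw [integral_norm_eq_lintegral_enorm hf.1, eLpNorm_one_eq_lintegral_enorm]
    _ ≤ (eLpNorm f p₁ (volume : Measure (Torus n))).toReal :=
        ENNReal.toReal_mono hf.2.ne (eLpNorm_le_eLpNorm_of_exponent_le Fact.out hf.1)

/-- The `k`-th Fourier coefficient as a continuous linear functional on `L^{p₁}`. -/
def φ (n : ℕ) (p₁ : ℝ≥0∞) [Fact (1 ≤ p₁)] (k : Fin n → ℤ) :
    Lp ℂ p₁ (volume : Measure (Torus n)) →L[ℂ] ℂ :=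
  LinearMap.mkContinuous
    { toFun := fun f => fourierCoeffT (⇑f) k
      map_add' := fun f g => by
        have h1 := integrable_mul_conj_eK (Lp.memLp f) k
        have h2 := integrable_mul_conj_eK (Lp.memLp g) k
        show fourierCoeffT (⇑(f + g)) k = fourierCoeffT (⇑f) k + fourierCoeffT (⇑g) k
        rw [fourierCoeffT_congr (Lp.coeFn_add f g) k]
        show (∫ x, ((⇑f + ⇑g) x) * (starRingEnd ℂ) (eK k x)) = _
        have : (fun x => ((⇑f + ⇑g) x) * (starRingEnd ℂ) (eK k x)) =
            fun x => f x * (starRingEnd ℂ) (eK k x) + g x * (starRingEnd ℂ) (eK k x) := by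
          funext x; simp [add_mul]
        rw [this, integral_add h1 h2]; rfl
      map_smul' := fun c f => by
        show fourierCoeffT (⇑(c • f)) k = c • fourierCoeffT (⇑f) k
        rw [fourierCoeffT_congr (Lp.coeFn_smul c f) k]
        show (∫ x, ((c • ⇑f) x) * (starRingEnd ℂ) (eK k x)) = _
        have : (fun x => ((c • ⇑f) x) * (starRingEnd ℂ) (eK k x)) =
            fun x => c • (f x * (starRingEnd ℂ) (eK k x)) := by
          funext x; simp [smul_eq_mul, mul_assoc]
        rw [this, integral_smul]; rfl }
    1
    (fun f => by
      rw [one_mul, Lp.norm_def]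
      exact norm_fourierCoeffT_le (Lp.memLp f) k)

lemma φ_apply {n : ℕ} {p₁ : ℝ≥0∞} [Fact (1 ≤ p₁)] (k : Fin n → ℤ)
    (f : Lp ℂ p₁ (volume : Measure (Torus n))) : φ n p₁ k f = fourierCoeffT (⇑f) k := rfl

lemma norm_φ_le {n : ℕ} {p₁ : ℝ≥0∞} [Fact (1 ≤ p₁)] (k : Fin n → ℤ) :
    ‖φ n p₁ k‖ ≤ 1 :=
  LinearMap.mkContinuous_norm_le _ zero_le_one _

end OpAux

open OpAux Filter

set_option maxHeartbeats 1000000 in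
/-- **`r`-nuclearity from `ℓ^r`-summability of the symbol on the torus.** Let `1 ≤ p₁, p₂ < ∞`,
`0 < r ≤ 1` and `σ : 𝕋ⁿ × ℤⁿ → ℂ` with `σ(·,k) ∈ L^{p₂}(μ)` for all `k` and
`∑_k ‖σ(·,k)‖_{L^{p₂}}^r < ∞`. Then `Op(σ)` is a well-defined bounded linear operator from
`L^{p₁}(μ)` to `L^{p₂}(μ)` and is `r`-nuclear. -/
theorem op_symbol_rNuclear (n : ℕ) (hn : 1 ≤ n)
    (p₁ p₂ : ℝ≥0∞) [Fact (1 ≤ p₁)] [Fact (1 ≤ p₂)] (hp₁ : p₁ ≠ ∞) (hp₂ : p₂ ≠ ∞)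
    (r : ℝ) (hr0 : 0 < r) (hr1 : r ≤ 1)
    (σ : Torus n → (Fin n → ℤ) → ℂ)
    (hσ : ∀ k, MemLp (fun x => σ x k) p₂ (volume : Measure (Torus n)))
    (hsum : Summable fun k : Fin n → ℤ =>
      (eLpNorm (fun x => σ x k) p₂ (volume : Measure (Torus n))).toReal ^ r) :
    (∃ A : Lp ℂ p₁ (volume : Measure (Torus n)) →L[ℂ]
          Lp ℂ p₂ (volume : Measure (Torus n)), IsOp σ A) ∧
    ∀ A : Lp ℂ p₁ (volume : Measure (Torus n)) →L[ℂ]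
          Lp ℂ p₂ (volume : Measure (Torus n)),
      IsOp σ A → IsRNuclear r A := by
  -- notation for the L^{p₂}-norms of the pieces of the symbol
  set c : (Fin n → ℤ) → ℝ :=
    fun k => (eLpNorm (fun x => σ x k) p₂ (volume : Measure (Torus n))).toReal with hc
  have hc0 : ∀ k, 0 ≤ c k := fun k => ENNReal.toReal_nonneg
  -- ℓ^r summability with r ≤ 1 implies ℓ¹ summability
  have hcsum : Summable c := by
    refine Summable.of_norm_bounded_eventually hsum ?_
    have h1 : ∀ᶠ k in cofinite, c k ^ r < 1 :=
      hsum.tendsto_cofinite_zero.eventually (gt_mem_nhds one_pos)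
    filter_upwards [h1] with k hk
    rw [Real.norm_of_nonneg (hc0 k)]
    rcases eq_or_lt_of_le (hc0 k) with h | h
    · show c k ≤ c k ^ r
      rw [← h, Real.zero_rpow hr0.ne']
    · have hck1 : c k ≤ 1 := by
        by_contra hgt
        push_neg at hgt
        have := Real.one_le_rpow hgt.le hr0.le
        linarith
      calc c k = c k ^ (1 : ℝ) := (Real.rpow_one _).symm
        _ ≤ c k ^ r := Real.rpow_le_rpow_of_exponent_ge h hck1 hr1
  -- σ(·,k) e_k is in L^{p₂} with the same norm
  have hmem : ∀ k, MemLp (fun x => σ x k * eK k x) p₂ (volume : Measure (Torus n)) := by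
    intro k
    refine ⟨(hσ k).1.mul (continuous_eK k).aestronglyMeasurable, ?_⟩
    rw [eLpNorm_congr_norm_ae (g := fun x => σ x k)
      (Eventually.of_forall fun x => by rw [norm_mul, norm_eK, mul_one])]
    exact (hσ k).2
  -- any F as in IsOp has ‖F k‖ = c k
  have hnormF : ∀ (F : (Fin n → ℤ) → Lp ℂ p₂ (volume : Measure (Torus n))),
      (∀ k, ⇑(F k) =ᵐ[volume] fun x => σ x k * eK k x) → ∀ k, ‖F k‖ = c k := by
    intro F hF k
    rw [Lp.norm_def, eLpNorm_congr_ae (hF k),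
      eLpNorm_congr_norm_ae (g := fun x => σ x k)
        (Eventually.of_forall fun x => by rw [norm_mul, norm_eK, mul_one])]
  -- the defining series is absolutely summable in L^{p₂}
  have hnormsum : ∀ (F : (Fin n → ℤ) → Lp ℂ p₂ (volume : Measure (Torus n))),
      (∀ k, ‖F k‖ = c k) → ∀ f : Lp ℂ p₁ (volume : Measure (Torus n)),
      Summable (fun k => ‖fourierCoeffT (⇑f) k • F k‖) := by
    intro F hF f
    refine Summable.of_nonneg_of_le (fun k => norm_nonneg _) (fun k => ?_)
      (hcsum.mul_left ‖f‖)
    rw [norm_smul, hF]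
    refine mul_le_mul_of_nonneg_right ?_ (hc0 k)
    rw [Lp.norm_def]
    exact norm_fourierCoeffT_le (Lp.memLp f) k
  have hser : ∀ (F : (Fin n → ℤ) → Lp ℂ p₂ (volume : Measure (Torus n))),
      (∀ k, ‖F k‖ = c k) → ∀ f : Lp ℂ p₁ (volume : Measure (Torus n)),
      Summable (fun k => fourierCoeffT (⇑f) k • F k) := by
    intro F hF f
    exact (hnormsum F hF f).of_norm
  constructor
  · -- existence of A
    set F0 : (Fin n → ℤ) → Lp ℂ p₂ (volume : Measure (Torus n)) :=
      fun k => (hmem k).toLp _ with hF0def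
    have hF0 : ∀ k, ⇑(F0 k) =ᵐ[volume] fun x => σ x k * eK k x :=
      fun k => (hmem k).coeFn_toLp
    have hF0norm : ∀ k, ‖F0 k‖ = c k := hnormF F0 hF0
    have hmapadd : ∀ f g : Lp ℂ p₁ (volume : Measure (Torus n)),
        (∑' k, (φ n p₁ k (f + g)) • F0 k)
          = (∑' k, (φ n p₁ k f) • F0 k) + ∑' k, (φ n p₁ k g) • F0 k := by
      intro f g
      have h1 := hser F0 hF0norm f
      have h2 := hser F0 hF0norm g
      calc (∑' k, (φ n p₁ k (f + g)) • F0 k)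
          = ∑' k, ((φ n p₁ k f) • F0 k + (φ n p₁ k g) • F0 k) := by
            congr 1; funext k; rw [map_add, add_smul]
        _ = (∑' k, (φ n p₁ k f) • F0 k) + ∑' k, (φ n p₁ k g) • F0 k := h1.tsum_add h2
    have hmapsmul : ∀ (a : ℂ) (f : Lp ℂ p₁ (volume : Measure (Torus n))),
        (∑' k, (φ n p₁ k (a • f)) • F0 k) = a • ∑' k, (φ n p₁ k f) • F0 k := by
      intro a f
      have h1 := hser F0 hF0norm f
      calc (∑' k, (φ n p₁ k (a • f)) • F0 k)
          = ∑' k, a • ((φ n p₁ k f) • F0 k) := by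
            congr 1; funext k; rw [_root_.map_smul, smul_eq_mul, mul_smul]
        _ = a • ∑' k, (φ n p₁ k f) • F0 k := h1.tsum_const_smul a
    set L : Lp ℂ p₁ (volume : Measure (Torus n)) →ₗ[ℂ] Lp ℂ p₂ (volume : Measure (Torus n)) :=
      { toFun := fun f => ∑' k, (φ n p₁ k f) • F0 k
        map_add' := hmapadd
        map_smul' := hmapsmul } with hLdef
    have hLbound : ∀ f, ‖L f‖ ≤ (∑' k, c k) * ‖f‖ := by
      intro f
      show ‖∑' k, (φ n p₁ k f) • F0 k‖ ≤ (∑' k, c k) * ‖f‖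
      calc ‖∑' k, (φ n p₁ k f) • F0 k‖
          ≤ ∑' k, ‖(φ n p₁ k f) • F0 k‖ :=
            norm_tsum_le_tsum_norm (hnormsum F0 hF0norm f)
        _ ≤ ∑' k, ‖f‖ * c k := by
            refine (hnormsum F0 hF0norm f).tsum_le_tsum (fun k => ?_) (hcsum.mul_left ‖f‖)
            rw [norm_smul, hF0norm]
            refine mul_le_mul_of_nonneg_right ?_ (hc0 k)
            rw [Lp.norm_def]
            exact norm_fourierCoeffT_le (Lp.memLp f) k
        _ = (∑' k, c k) * ‖f‖ := by rw [_root_.tsum_mul_left, mul_comm]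
    refine ⟨L.mkContinuous (∑' k, c k) hLbound, F0, hF0, fun f => ?_⟩
    rw [LinearMap.mkContinuous_apply]
    exact (hser F0 hF0norm f).hasSum
  · -- r-nuclearity
    rintro A ⟨F, hF, hA⟩
    have hFnorm : ∀ k, ‖F k‖ = c k := hnormF F hF
    haveI : Nonempty (Fin n) := ⟨⟨0, hn⟩⟩
    haveI : Infinite (Fin n → ℤ) :=
      Infinite.of_injective (fun m : ℤ => Function.const _ m)
        (fun a b h => congrFun h ⟨0, hn⟩)
    obtain ⟨d⟩ : Nonempty (Denumerable (Fin n → ℤ)) :=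
      nonempty_denumerable_iff.mpr ⟨inferInstance, inferInstance⟩
    haveI := d
    let e : ℕ ≃ (Fin n → ℤ) := (Denumerable.eqv (Fin n → ℤ)).symm
    refine ⟨fun m => φ n p₁ (e m), fun m => F (e m), fun v => ?_, ?_⟩
    · simp only [φ_apply]
      exact (e.hasSum_iff).mpr (hA v)
    · refine Summable.of_nonneg_of_le
        (fun m => mul_nonneg (Real.rpow_nonneg (norm_nonneg _) r)
          (Real.rpow_nonneg (norm_nonneg _) r))
        (fun m => ?_) ((e.summable_iff).mpr hsum)
    -- the target summable function is (fun k => c k ^ r) ∘ e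
      show ‖φ n p₁ (e m)‖ ^ r * ‖F (e m)‖ ^ r ≤ c (e m) ^ r
      calc ‖φ n p₁ (e m)‖ ^ r * ‖F (e m)‖ ^ r
          ≤ 1 * ‖F (e m)‖ ^ r :=
            mul_le_mul_of_nonneg_right
              (Real.rpow_le_one (norm_nonneg _) (norm_φ_le _) hr0.le)
              (Real.rpow_nonneg (norm_nonneg _) r)
        _ = c (e m) ^ r := by rw [one_mul, hFnorm]
end
end

section
/- Let 1 ≤ p₁, p₂ < ∞ and 0 < r ≤ 1, and let σ : 𝕋ⁿ × ℤⁿ → ℂ be such that σ(·,k) ∈ L^{p₂}(μ) for every k ∈ ℤⁿ and there exist constants C > 0 and s > n with ‖σ(·,k)‖_{L^{p₂}(μ)} ≤ C ⟨k⟩^{−s/r} for all k ∈ ℤⁿ. Then the operator A = Op(σ) with symbol σ is a well-defined bounded linear operator from L^{p₁}(μ) to L^{p₂}(μ) and is r-nuclear. -/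
open MeasureTheory ENNReal NNReal Real

noncomputable section

/-- The weight `⟨k⟩ = (1 + 4π² ∑ᵢ kᵢ²)^{1/2}` on `ℤⁿ`. -/
noncomputable def jpW {n : ℕ} (k : Fin n → ℤ) : ℝ :=
  (1 + 4 * π ^ 2 * ∑ i, ((k i : ℝ)) ^ 2) ^ ((1 : ℝ) / 2)

/-! ### Auxiliary lemmas -/

instance addCircleProb : IsProbabilityMeasure (volume : Measure (AddCircle (1:ℝ))) :=
  ⟨by simp [AddCircle.measure_univ]⟩

lemma norm_eK {n : ℕ} (k : Fin n → ℤ) (x : Torus n) : ‖eK k x‖ = 1 := by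
  rw [eK, norm_prod]
  exact Finset.prod_eq_one fun i _ => Circle.norm_coe _

lemma abs_eK {n : ℕ} (k : Fin n → ℤ) (x : Torus n) : ‖eK k x‖ = 1 :=
  norm_eK k x

lemma continuous_eK {n : ℕ} (k : Fin n → ℤ) : Continuous (eK k) :=
  continuous_finset_prod _ fun i _ => (map_continuous (fourier (k i))).comp (continuous_apply i)

lemma one_le_jpW {n : ℕ} (k : Fin n → ℤ) : 1 ≤ jpW k := by
  have h : (1:ℝ) ≤ 1 + 4 * π ^ 2 * ∑ i, ((k i : ℝ)) ^ 2 := by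
    have h0 : (0:ℝ) ≤ ∑ i, ((k i : ℝ)) ^ 2 := Finset.sum_nonneg fun i _ => sq_nonneg _
    nlinarith [sq_nonneg π]
  exact Real.one_le_rpow h (by norm_num)

lemma jpW_nonneg {n : ℕ} (k : Fin n → ℤ) : 0 ≤ jpW k :=
  le_trans zero_le_one (one_le_jpW k)

lemma summable_int_aux {t : ℝ} (ht : 1 < t) :
    Summable (fun m : ℤ => (1 + (m:ℝ)^2) ^ (-(t/2))) := by
  have ht0 : 0 < t := lt_trans one_pos ht
  have hb : Summable (fun m : ℤ => (1 / |(m:ℝ) + 0| ^ t) + (if m = 0 then (1:ℝ) else 0)) := by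
    refine ((Real.summable_one_div_int_add_rpow 0 t).mpr ht).add ?_
    exact summable_of_ne_finset_zero (s := {0}) (fun b hb => by
      simp only [Finset.mem_singleton] at hb; simp [hb])
  refine hb.of_nonneg_of_le (fun m => Real.rpow_nonneg (by positivity) _) (fun m => ?_)
  rcases eq_or_ne m 0 with h | h
  · simp [h, Real.zero_rpow ht0.ne']
  · have hm1 : (1:ℝ) ≤ |(m:ℝ)| := by
      have : (1:ℤ) ≤ |m| := Int.one_le_abs (by exact_mod_cast h)
      calc (1:ℝ) ≤ (|m| : ℤ) := by exact_mod_cast this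
        _ = |(m:ℝ)| := by push_cast; ring
    have hm0 : (0:ℝ) < (m:ℝ)^2 := by
      rw [← sq_abs]; exact pow_pos (lt_of_lt_of_le zero_lt_one hm1) 2
    have h1 : (1 + (m:ℝ)^2) ^ (-(t/2)) ≤ ((m:ℝ)^2) ^ (-(t/2)) :=
      Real.rpow_le_rpow_of_nonpos hm0 (by nlinarith) (neg_nonpos.mpr (by positivity))
    have h2 : ((m:ℝ)^2) ^ (-(t/2)) = |(m:ℝ)| ^ (-t) := by
      rw [← sq_abs, ← Real.rpow_natCast |(m:ℝ)| 2, ← Real.rpow_mul (abs_nonneg _)]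
      congr 1
      push_cast
      ring
    have h3 : |(m:ℝ)| ^ (-t) = 1 / |(m:ℝ) + 0| ^ t := by
      rw [add_zero, Real.rpow_neg (abs_nonneg _), one_div]
    rw [if_neg h]
    calc (1 + (m:ℝ)^2) ^ (-(t/2)) ≤ ((m:ℝ)^2) ^ (-(t/2)) := h1
      _ = 1 / |(m:ℝ) + 0| ^ t := by rw [h2, h3]
      _ ≤ _ := by norm_num

lemma summable_pi_prod {g : ℤ → ℝ} (hg0 : ∀ m, 0 ≤ g m) (hg : Summable g) (n : ℕ) :
    Summable (fun k : Fin n → ℤ => ∏ i, g (k i)) := by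
  induction n with
  | zero =>
    exact (hasSum_single (f := fun k : Fin 0 → ℤ => ∏ i, g (k i)) default
      (fun b hb => absurd (Subsingleton.elim b default) hb)).summable
  | succ n ih =>
    have h0g : 0 ≤ g := hg0
    have h0p : 0 ≤ (fun k : Fin n → ℤ => ∏ i, g (k i)) :=
      fun k => Finset.prod_nonneg fun i _ => hg0 _
    have h := Summable.mul_of_nonneg (f := g) (g := fun k : Fin n → ℤ => ∏ i, g (k i))
      hg ih h0g h0p
    refine ((Fin.consEquiv (fun _ : Fin (n+1) => ℤ)).summable_iff).mp (h.congr fun p => ?_)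
    simp [Function.comp, Fin.consEquiv, Fin.prod_univ_succ]

lemma summable_jpW {n : ℕ} (hn : 1 ≤ n) {s : ℝ} (hs : (n : ℝ) < s) :
    Summable (fun k : Fin n → ℤ => jpW k ^ (-s)) := by
  have hn0 : (0:ℝ) < n := by exact_mod_cast Nat.lt_of_lt_of_le Nat.zero_lt_one hn
  have ht1 : 1 < s / n := (one_lt_div hn0).mpr hs
  have hprod := summable_pi_prod (g := fun m : ℤ => (1 + (m:ℝ)^2) ^ (-(s/n/2)))
    (fun m => Real.rpow_nonneg (by positivity) _) (summable_int_aux ht1) n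
  refine hprod.of_nonneg_of_le (fun k => Real.rpow_nonneg (jpW_nonneg k) _) (fun k => ?_)
  set Q : ℝ := 1 + 4 * π ^ 2 * ∑ i, ((k i : ℝ)) ^ 2 with hQ
  have hQ1 : (1:ℝ) ≤ Q := by
    have h0 : (0:ℝ) ≤ ∑ i, ((k i : ℝ)) ^ 2 := Finset.sum_nonneg fun i _ => sq_nonneg _
    nlinarith [sq_nonneg π]
  have hQ0 : (0:ℝ) < Q := lt_of_lt_of_le one_pos hQ1
  have hP0 : (0:ℝ) < ∏ i, (1 + ((k i : ℝ))^2) :=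
    Finset.prod_pos fun i _ => by positivity
  have hPQ : ∏ i, (1 + ((k i : ℝ))^2) ≤ Q ^ n := by
    calc ∏ i, (1 + ((k i : ℝ))^2) ≤ ∏ _i : Fin n, Q := by
          refine Finset.prod_le_prod (fun i _ => by positivity) (fun i _ => ?_)
          have h1 : ((k i : ℝ))^2 ≤ ∑ j, ((k j : ℝ)) ^ 2 :=
            Finset.single_le_sum (f := fun j => ((k j : ℝ))^2)
              (fun j _ => sq_nonneg _) (Finset.mem_univ i)
          have hS0 : (0:ℝ) ≤ ∑ j, ((k j : ℝ)) ^ 2 :=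
            Finset.sum_nonneg fun j _ => sq_nonneg _
          have h2 : (0:ℝ) ≤ (4*π^2 - 1) * ∑ j, ((k j : ℝ))^2 :=
            mul_nonneg (by nlinarith [Real.pi_gt_three]) hS0
          simp only [hQ]
          nlinarith [h1, h2]
      _ = Q ^ n := by rw [Finset.prod_const, Finset.card_univ, Fintype.card_fin]
  have hs0 : (0:ℝ) < s := lt_trans hn0 hs
  set u : ℝ := s / n / 2 with hu
  have step1 : jpW k ^ (-s) = Q ^ (-(s/2)) := by
    rw [jpW, ← hQ, ← Real.rpow_mul hQ0.le]
    congr 1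
    ring
  have step2 : Q ^ (-(s/2)) = (Q ^ (n:ℝ)) ^ (-u) := by
    rw [← Real.rpow_mul hQ0.le]
    congr 1
    rw [hu]
    field_simp
  have step3 : (Q ^ (n:ℝ)) ^ (-u) ≤ (∏ i, (1 + ((k i : ℝ))^2)) ^ (-u) := by
    refine Real.rpow_le_rpow_of_nonpos hP0 ?_ (neg_nonpos.mpr (le_of_lt (by positivity)))
    rwa [Real.rpow_natCast]
  have step4 : (∏ i, (1 + ((k i : ℝ))^2)) ^ (-u) =
      ∏ i, (1 + ((k i : ℝ))^2) ^ (-u) :=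
    (Real.finset_prod_rpow _ _ (fun i _ => by positivity) _).symm
  calc jpW k ^ (-s) = (Q ^ (n:ℝ)) ^ (-u) := by rw [step1, step2]
    _ ≤ (∏ i, (1 + ((k i : ℝ))^2)) ^ (-u) := step3
    _ = ∏ i, (1 + ((k i : ℝ))^2) ^ (-(s/↑n/2)) := step4

lemma integrable_mul_conj_eK {n : ℕ} {p₁ : ℝ≥0∞} [Fact (1 ≤ p₁)]
    (f : Lp ℂ p₁ (volume : Measure (Torus n))) (k : Fin n → ℤ) :
    Integrable (fun x => f x * (starRingEnd ℂ) (eK k x)) (volume : Measure (Torus n)) := by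
  have hint : Integrable (⇑f) (volume : Measure (Torus n)) := (Lp.memLp f).integrable Fact.out
  have hmeas : AEStronglyMeasurable (fun x : Torus n => (starRingEnd ℂ) (eK k x))
      (volume : Measure (Torus n)) :=
    (continuous_star.comp (continuous_eK k)).aestronglyMeasurable
  have h := Integrable.bdd_mul hint hmeas (c := 1) (Filter.Eventually.of_forall fun x => by simp [abs_eK])
  exact h.congr (Filter.Eventually.of_forall fun x => mul_comm _ _)

lemma norm_fourierCoeffT_le {n : ℕ} {p₁ : ℝ≥0∞} [Fact (1 ≤ p₁)]
    (f : Lp ℂ p₁ (volume : Measure (Torus n))) (k : Fin n → ℤ) :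
    ‖fourierCoeffT (⇑f) k‖ ≤ ‖f‖ := by
  have hint : Integrable (⇑f) (volume : Measure (Torus n)) := (Lp.memLp f).integrable Fact.out
  have h1 : ‖fourierCoeffT (⇑f) k‖ ≤
      ∫ x, ‖f x * (starRingEnd ℂ) (eK k x)‖ ∂(volume : Measure (Torus n)) :=
    norm_integral_le_integral_norm _
  have h2 : ∫ x, ‖f x * (starRingEnd ℂ) (eK k x)‖ ∂(volume : Measure (Torus n)) =
      ∫ x, ‖f x‖ ∂(volume : Measure (Torus n)) := by
    refine integral_congr_ae (Filter.Eventually.of_forall fun x => ?_)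
    simp [norm_mul, abs_eK]
  have h3 : ENNReal.ofReal (∫ x, ‖f x‖ ∂(volume : Measure (Torus n))) =
      eLpNorm (⇑f) 1 (volume : Measure (Torus n)) := by
    rw [ofReal_integral_norm_eq_lintegral_enorm hint, eLpNorm_one_eq_lintegral_enorm]
  have h4 : eLpNorm (⇑f) 1 (volume : Measure (Torus n)) ≤
      eLpNorm (⇑f) p₁ (volume : Measure (Torus n)) :=
    eLpNorm_le_eLpNorm_of_exponent_le Fact.out (Lp.aestronglyMeasurable f)
  calc ‖fourierCoeffT (⇑f) k‖ ≤ _ := h1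
    _ = ∫ x, ‖f x‖ ∂(volume : Measure (Torus n)) := h2
    _ = (ENNReal.ofReal (∫ x, ‖f x‖ ∂(volume : Measure (Torus n)))).toReal :=
        (ENNReal.toReal_ofReal (integral_nonneg fun x => norm_nonneg _)).symm
    _ = (eLpNorm (⇑f) 1 (volume : Measure (Torus n))).toReal := by rw [h3]
    _ ≤ (eLpNorm (⇑f) p₁ (volume : Measure (Torus n))).toReal :=
        ENNReal.toReal_mono (Lp.eLpNorm_ne_top f) h4
    _ = ‖f‖ := (Lp.norm_def f).symm

/-- The `k`-th Fourier coefficient as a continuous linear functional on `L^{p₁}`. -/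
noncomputable def coeffCLM (n : ℕ) (p₁ : ℝ≥0∞) [Fact (1 ≤ p₁)] (k : Fin n → ℤ) :
    Lp ℂ p₁ (volume : Measure (Torus n)) →L[ℂ] ℂ :=
  LinearMap.mkContinuous
    { toFun := fun f => fourierCoeffT (⇑f) k
      map_add' := fun f g => by
        simp only [fourierCoeffT]
        rw [← integral_add (integrable_mul_conj_eK f k) (integrable_mul_conj_eK g k)]
        refine integral_congr_ae ?_
        filter_upwards [Lp.coeFn_add f g] with x hx
        simp only [hx, Pi.add_apply, add_mul]
      map_smul' := fun c f => by
        simp only [fourierCoeffT, RingHom.id_apply]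
        rw [← integral_smul]
        refine integral_congr_ae ?_
        filter_upwards [Lp.coeFn_smul c f] with x hx
        simp only [hx, Pi.smul_apply, smul_eq_mul, mul_assoc] }
    1 (fun f => by rw [one_mul]; exact norm_fourierCoeffT_le f k)

lemma coeffCLM_apply {n : ℕ} {p₁ : ℝ≥0∞} [Fact (1 ≤ p₁)] (k : Fin n → ℤ)
    (f : Lp ℂ p₁ (volume : Measure (Torus n))) :
    coeffCLM n p₁ k f = fourierCoeffT (⇑f) k := rfl

lemma norm_coeffCLM_le {n : ℕ} {p₁ : ℝ≥0∞} [Fact (1 ≤ p₁)] (k : Fin n → ℤ) :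
    ‖coeffCLM n p₁ k‖ ≤ 1 :=
  LinearMap.mkContinuous_norm_le _ zero_le_one _

lemma eLpNorm_mul_eK {n : ℕ} {p₂ : ℝ≥0∞} (σk : Torus n → ℂ) (k : Fin n → ℤ) :
    eLpNorm (fun x => σk x * eK k x) p₂ (volume : Measure (Torus n)) =
      eLpNorm σk p₂ (volume : Measure (Torus n)) :=
  eLpNorm_congr_norm_ae (Filter.Eventually.of_forall fun x => by simp [norm_mul, abs_eK])

lemma memℒp_mul_eK {n : ℕ} {p₂ : ℝ≥0∞} {σk : Torus n → ℂ}
    (h : MemLp σk p₂ (volume : Measure (Torus n))) (k : Fin n → ℤ) :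
    MemLp (fun x => σk x * eK k x) p₂ (volume : Measure (Torus n)) :=
  ⟨h.aestronglyMeasurable.mul (continuous_eK k).aestronglyMeasurable,
    by rw [eLpNorm_mul_eK]; exact h.2⟩

/-- **`r`-nuclearity from a decay estimate on the `L^{p₂}`-norms of the symbol.** Let
`1 ≤ p₁, p₂ < ∞`, `0 < r ≤ 1`, and `σ : 𝕋ⁿ × ℤⁿ → ℂ` with `σ(·,k) ∈ L^{p₂}(μ)` and
`‖σ(·,k)‖_{L^{p₂}} ≤ C ⟨k⟩^{-s/r}` for some `C > 0`, `s > n`. Then `Op(σ)` is a well-defined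
bounded operator from `L^{p₁}(μ)` to `L^{p₂}(μ)` and is `r`-nuclear. -/
theorem op_symbol_decay_rNuclear (n : ℕ) (hn : 1 ≤ n)
    (p₁ p₂ : ℝ≥0∞) [Fact (1 ≤ p₁)] [Fact (1 ≤ p₂)] (hp₁ : p₁ ≠ ∞) (hp₂ : p₂ ≠ ∞)
    (r : ℝ) (hr0 : 0 < r) (hr1 : r ≤ 1)
    (σ : Torus n → (Fin n → ℤ) → ℂ)
    (hσ : ∀ k, MemLp (fun x => σ x k) p₂ (volume : Measure (Torus n)))
    (C : ℝ) (hC : 0 < C) (s : ℝ) (hs : (n : ℝ) < s)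
    (hdecay : ∀ k : Fin n → ℤ,
      (eLpNorm (fun x => σ x k) p₂ (volume : Measure (Torus n))).toReal ≤
        C * jpW k ^ (-(s / r))) :
    (∃ A : Lp ℂ p₁ (volume : Measure (Torus n)) →L[ℂ]
          Lp ℂ p₂ (volume : Measure (Torus n)), IsOp σ A) ∧
    ∀ A : Lp ℂ p₁ (volume : Measure (Torus n)) →L[ℂ]
          Lp ℂ p₂ (volume : Measure (Torus n)),
      IsOp σ A → IsRNuclear r A := by
  have hn0 : (0:ℝ) < n := by exact_mod_cast Nat.lt_of_lt_of_le Nat.zero_lt_one hn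
  have hs0 : (0:ℝ) < s := lt_trans hn0 hs
  have hssr : s ≤ s / r := (le_div_iff₀ hr0).mpr (by nlinarith)
  have hjp : ∀ k : Fin n → ℤ, jpW k ^ (-(s/r)) ≤ jpW k ^ (-s) := fun k =>
    Real.rpow_le_rpow_of_exponent_le (one_le_jpW k) (neg_le_neg hssr)
  have hS : Summable (fun k : Fin n → ℤ => jpW k ^ (-s)) := summable_jpW hn hs
  constructor
  · -- existence of the operator
    have hσmul : ∀ k, MemLp (fun x => σ x k * eK k x) p₂ (volume : Measure (Torus n)) :=
      fun k => memℒp_mul_eK (hσ k) k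
    let G : (Fin n → ℤ) → Lp ℂ p₂ (volume : Measure (Torus n)) := fun k => (hσmul k).toLp _
    have hGnorm : ∀ k, ‖G k‖ =
        (eLpNorm (fun x => σ x k) p₂ (volume : Measure (Torus n))).toReal := fun k => by
      rw [show G k = (hσmul k).toLp _ from rfl, Lp.norm_toLp, eLpNorm_mul_eK]
    have hGle : ∀ k, ‖G k‖ ≤ C * jpW k ^ (-s) := fun k => by
      rw [hGnorm k]
      exact (hdecay k).trans (mul_le_mul_of_nonneg_left (hjp k) hC.le)
    have hterm : ∀ (f : Lp ℂ p₁ (volume : Measure (Torus n))) k,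
        ‖coeffCLM n p₁ k f • G k‖ ≤ ‖f‖ * (C * jpW k ^ (-s)) := fun f k => by
      rw [norm_smul, coeffCLM_apply]
      exact mul_le_mul (norm_fourierCoeffT_le f k) (hGle k) (norm_nonneg _) (norm_nonneg f)
    have hsum : ∀ f : Lp ℂ p₁ (volume : Measure (Torus n)),
        Summable (fun k => coeffCLM n p₁ k f • G k) := fun f =>
      Summable.of_norm_bounded ((hS.mul_left C).mul_left ‖f‖) (hterm f)
    let A₀ : Lp ℂ p₁ (volume : Measure (Torus n)) →ₗ[ℂ]
        Lp ℂ p₂ (volume : Measure (Torus n)) :=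
      { toFun := fun f => ∑' k, coeffCLM n p₁ k f • G k
        map_add' := fun f g => by
          calc (∑' k, coeffCLM n p₁ k (f + g) • G k)
              = ∑' k, (coeffCLM n p₁ k f • G k + coeffCLM n p₁ k g • G k) :=
                tsum_congr fun k => by rw [map_add, add_smul]
            _ = _ := Summable.tsum_add (hsum f) (hsum g)
        map_smul' := fun c f => by
          simp only [RingHom.id_apply]
          calc (∑' k, coeffCLM n p₁ k (c • f) • G k)
              = ∑' k, c • (coeffCLM n p₁ k f • G k) :=
                tsum_congr fun k => by rw [_root_.map_smul, smul_assoc]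
            _ = c • ∑' k, coeffCLM n p₁ k f • G k := Summable.tsum_const_smul c (hsum f) }
    have hA₀ : ∀ f, ‖A₀ f‖ ≤ (C * ∑' k : Fin n → ℤ, jpW k ^ (-s)) * ‖f‖ := fun f => by
      have hsn : Summable (fun k => ‖coeffCLM n p₁ k f • G k‖) :=
        Summable.of_nonneg_of_le (fun k => norm_nonneg _) (hterm f)
          ((hS.mul_left C).mul_left ‖f‖)
      calc ‖A₀ f‖ ≤ ∑' k, ‖coeffCLM n p₁ k f • G k‖ := norm_tsum_le_tsum_norm hsn
        _ ≤ ∑' k, ‖f‖ * (C * jpW k ^ (-s)) :=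
            Summable.tsum_le_tsum (hterm f) hsn ((hS.mul_left C).mul_left ‖f‖)
        _ = ‖f‖ * (C * ∑' k : Fin n → ℤ, jpW k ^ (-s)) := by rw [_root_.tsum_mul_left, _root_.tsum_mul_left]
        _ = (C * ∑' k : Fin n → ℤ, jpW k ^ (-s)) * ‖f‖ := mul_comm _ _
    refine ⟨A₀.mkContinuous _ hA₀, G, fun k => MemLp.coeFn_toLp _, fun f => ?_⟩
    exact (hsum f).hasSum
  · -- r-nuclearity
    rintro A ⟨F, hFae, hFsum⟩
    haveI : Infinite (Fin n → ℤ) := Infinite.of_injective (fun m : ℤ => fun _ => m)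
      (fun a b h => congrFun h ⟨0, hn⟩)
    haveI : Denumerable (Fin n → ℤ) := Denumerable.ofEncodableOfInfinite _
    set e : ℕ ≃ (Fin n → ℤ) := (Denumerable.eqv (Fin n → ℤ)).symm with he
    refine ⟨fun m => coeffCLM n p₁ (e m), fun m => F (e m), fun f => ?_, ?_⟩
    · have h := (e.hasSum_iff (f := fun k => fourierCoeffT (⇑f) k • F k)).mpr (hFsum f)
      exact h
    · have hFnorm : ∀ k, ‖F k‖ ≤ C * jpW k ^ (-(s/r)) := fun k => by
        rw [Lp.norm_def, eLpNorm_congr_ae (hFae k), eLpNorm_mul_eK]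
        exact hdecay k
      have hy : ∀ k, ‖F k‖ ^ r ≤ C^r * jpW k ^ (-s) := fun k => by
        calc ‖F k‖ ^ r ≤ (C * jpW k ^ (-(s/r))) ^ r :=
              Real.rpow_le_rpow (norm_nonneg _) (hFnorm k) hr0.le
          _ = C^r * (jpW k ^ (-(s/r)))^r :=
              Real.mul_rpow hC.le (Real.rpow_nonneg (jpW_nonneg k) _)
          _ = C^r * jpW k ^ (-(s/r) * r) := by rw [← Real.rpow_mul (jpW_nonneg k)]
          _ = C^r * jpW k ^ (-s) := by rw [neg_mul, div_mul_cancel₀ _ hr0.ne']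
      have hbound : Summable (fun m : ℕ => C^r * jpW (e m) ^ (-s)) := by
        have := (e.summable_iff (f := fun k : Fin n → ℤ => C^r * jpW k ^ (-s))).mpr
          (hS.mul_left (C^r))
        exact this
      refine Summable.of_nonneg_of_le
        (fun m => mul_nonneg (Real.rpow_nonneg (norm_nonneg _) _)
          (Real.rpow_nonneg (norm_nonneg _) _))
        (fun m => ?_) hbound
      calc ‖coeffCLM n p₁ (e m)‖ ^ r * ‖F (e m)‖ ^ r
          ≤ 1 * (C^r * jpW (e m) ^ (-s)) :=
            mul_le_mul
              (Real.rpow_le_one (norm_nonneg _) (norm_coeffCLM_le (e m)) hr0.le)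
              (hy (e m)) (Real.rpow_nonneg (norm_nonneg _) _) zero_le_one
        _ = C^r * jpW (e m) ^ (-s) := one_mul _
end
end
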